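/- Let β ∈ (0,1) and κ ∈ ℝ satisfy cos(πβ) > κ sin(πβ), set γ := −4 sin(πβ)/(cos(πβ) − κ sin(πβ)), and let W_ζ(ζ) := 1 + (γ/(4i))·[coth(π(ζ−iβ)/2) − coth(π(ζ+iβ)/2)]. Let f be holomorphic on the strip D = {−1 < Im ζ < 1} with f(−ζ) = −f(ζ) and f(conj ζ) = conj(f(ζ)) for all ζ ∈ D, such that f' extends continuously to cl(D), is nonvanishing on cl(D), and f'(ζ) → 1 as |Re ζ| → ∞ uniformly in Im ζ. Assume the Helmholtz–Kirchhoff condition f''(iβ)/f'(iβ) = πiκ. Define V := −Im(W_ζ/f') on D \ {iβ, −iβ}. Then there exists r₀ > 0 such that for every r ∈ (0, r₀] and every ζ with |ζ − iβ| = r, Re ζ > 0, and 0 < Im ζ < 1, one has V(ζ) < 0. -/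

import Mathlib

open Set

/-- Complex hyperbolic cotangent. -/
noncomputable def cCoth (z : ℂ) : ℂ := Complex.cosh z / Complex.sinh z

/-- The derivative `W_ζ` of the complex relative velocity potential for a point vortex of
strength `γ` at `iβ` and a mirror vortex of strength `-γ` at `-iβ` in the strip. -/
noncomputable def Wzeta (γ β : ℝ) (z : ℂ) : ℂ :=
  1 + (γ : ℂ) / (4 * Complex.I) *
    (cCoth ((Real.pi : ℂ) / 2 * (z - Complex.I * β)) -
      cCoth ((Real.pi : ℂ) / 2 * (z + Complex.I * β)))

/-- The circulation `γ(κ,β)` determined by the Helmholtz–Kirchhoff condition. -/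
noncomputable def gammaPV (κ β : ℝ) : ℝ :=
  -4 * Real.sin (Real.pi * β) / (Real.cos (Real.pi * β) - κ * Real.sin (Real.pi * β))

/-- The open strip `D = {ζ : -1 < Im ζ < 1}`. -/
def Dstrip : Set ℂ := {z : ℂ | z.im ∈ Ioo (-1 : ℝ) 1}

/-- The closed strip `cl(D) = {ζ : -1 ≤ Im ζ ≤ 1}`. -/
def clDstrip : Set ℂ := {z : ℂ | z.im ∈ Icc (-1 : ℝ) 1}

section Aux

open Complex Filter

theorem isOpen_Dstrip : IsOpen Dstrip :=
  IsOpen.preimage Complex.continuous_im isOpen_Ioo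

theorem D_sub_clD : Dstrip ⊆ clDstrip := fun z hz => by
  simp only [Dstrip, clDstrip, mem_setOf_eq, mem_Ioo, mem_Icc] at *
  exact ⟨hz.1.le, hz.2.le⟩

theorem mem_D_conj {z : ℂ} (h : z ∈ Dstrip) : (starRingEnd ℂ) z ∈ Dstrip := by
  simp only [Dstrip, mem_setOf_eq, Complex.conj_im, mem_Ioo] at *
  constructor <;> linarith [h.1, h.2]

theorem mem_D_neg {z : ℂ} (h : z ∈ Dstrip) : -z ∈ Dstrip := by
  simp only [Dstrip, mem_setOf_eq, Complex.neg_im, mem_Ioo] at *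
  constructor <;> linarith [h.1, h.2]

theorem deriv_conj_symm (f : ℂ → ℂ) (hf : DifferentiableOn ℂ f Dstrip)
    (hconj : ∀ z ∈ Dstrip, f ((starRingEnd ℂ) z) = (starRingEnd ℂ) (f z))
    {z : ℂ} (hz : z ∈ Dstrip) :
    deriv f ((starRingEnd ℂ) z) = (starRingEnd ℂ) (deriv f z) := by
  have hzd : DifferentiableAt ℂ f z :=
    (hf z hz).differentiableAt (isOpen_Dstrip.mem_nhds hz)
  have hD : HasDerivAt f (deriv f z) z := hzd.hasDerivAt
  have key : HasDerivAt f ((starRingEnd ℂ) (deriv f z)) ((starRingEnd ℂ) z) := by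
    have h1 : HasDerivAt (fun w => (starRingEnd ℂ) (f ((starRingEnd ℂ) w)))
        ((starRingEnd ℂ) (deriv f z)) ((starRingEnd ℂ) z) := by
      rw [hasDerivAt_iff_tendsto_slope]
      have hmap : Filter.Tendsto (fun w : ℂ => (starRingEnd ℂ) w)
          (nhdsWithin ((starRingEnd ℂ) z) {((starRingEnd ℂ) z)}ᶜ) (nhdsWithin z {z}ᶜ) := by
        apply Filter.Tendsto.inf
        · have : Filter.Tendsto (starRingEnd ℂ) (nhds ((starRingEnd ℂ) z)) (nhds z) := by
            simpa using (Complex.continuous_conj.tendsto ((starRingEnd ℂ) z))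
          exact this
        · refine Filter.tendsto_principal_principal.2 ?_
          intro w hw hc
          apply hw
          simp only [mem_compl_iff, mem_singleton_iff] at *
          exact (by simpa using congrArg (starRingEnd ℂ) hc)
      have hs : Filter.Tendsto (slope f z) (nhdsWithin z {z}ᶜ) (nhds (deriv f z)) :=
        hasDerivAt_iff_tendsto_slope.mp hD
      have := (Complex.continuous_conj.tendsto (deriv f z)).comp (hs.comp hmap)
      refine this.congr ?_
      intro w
      simp only [Function.comp_apply, slope_def_field]
      field_simp
      simp only [map_div₀, map_sub, Complex.conj_conj]
    refine h1.congr_of_eventuallyEq ?_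
    have hnb : Dstrip ∈ nhds ((starRingEnd ℂ) z) := isOpen_Dstrip.mem_nhds (mem_D_conj hz)
    filter_upwards [hnb] with w hw
    have := hconj _ (mem_D_conj hw)
    simp only [Complex.conj_conj] at this
    rw [this]
  exact key.deriv

theorem deriv_neg_symm (f : ℂ → ℂ) (hf : DifferentiableOn ℂ f Dstrip)
    (hodd : ∀ z ∈ Dstrip, f (-z) = -f z)
    {z : ℂ} (hz : z ∈ Dstrip) : deriv f (-z) = deriv f z := by
  have hnz : -z ∈ Dstrip := mem_D_neg hz
  have hD : HasDerivAt f (deriv f (-z)) (-z) :=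
    ((hf _ hnz).differentiableAt (isOpen_Dstrip.mem_nhds hnz)).hasDerivAt
  have h1 : HasDerivAt (fun w => f (-w)) (-(deriv f (-z))) z := by
    have := hD.comp z (hasDerivAt_neg z); simp only [mul_neg, mul_one] at this; exact this
  have h2 : HasDerivAt (fun w => -f w) (-(deriv f (-z))) z := by
    refine h1.congr_of_eventuallyEq ?_
    filter_upwards [isOpen_Dstrip.mem_nhds hz] with w hw
    exact (hodd w hw).symm
  have h3 : HasDerivAt f (deriv f (-z)) z := by simpa [Pi.neg_def] using h2.neg
  rw [h3.deriv]

theorem sinh_zero_int {v : ℂ} (h : Complex.sinh v = 0) : ∃ k : ℤ, v = k * Real.pi * I := by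
  have h2 : Complex.sin (v * I) = 0 := by rw [Complex.sin_mul_I, h, zero_mul]
  rw [Complex.sin_eq_zero_iff] at h2
  obtain ⟨k, hk⟩ := h2
  refine ⟨-k, ?_⟩
  have : v * I * I = (k:ℂ) * Real.pi * I := by rw [hk]
  have hI : v * I * I = -v := by simp [mul_assoc, Complex.I_mul_I]
  push_cast
  rw [hI] at this
  linear_combination -this

theorem sinh_ne_zero_small {v : ℂ} (h0 : v ≠ 0) (h : ‖v‖ < Real.pi) : Complex.sinh v ≠ 0 := by
  intro hs
  obtain ⟨k, hk⟩ := sinh_zero_int hs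
  rcases eq_or_ne k 0 with rfl | hkne
  · simp at hk; exact h0 hk
  · rw [hk] at h
    have heq : ‖(k:ℂ) * (Real.pi:ℂ) * I‖ = |(k:ℝ)| * Real.pi := by
      rw [norm_mul, norm_mul, Complex.norm_I, mul_one, Complex.norm_real, Complex.norm_intCast,
        Real.norm_eq_abs, _root_.abs_of_nonneg Real.pi_pos.le]
    rw [heq] at h
    have hk1 : (1:ℝ) ≤ |(k:ℝ)| := by
      have := Int.one_le_abs hkne
      calc (1:ℝ) ≤ |(k:ℤ)| := by exact_mod_cast this
        _ = |(k:ℝ)| := by push_cast; rfl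
    nlinarith [Real.pi_pos]

theorem tendsto_sinh_div :
    Tendsto (fun v : ℂ => Complex.sinh v / v) (nhdsWithin 0 {(0:ℂ)}ᶜ) (nhds 1) := by
  have h := hasDerivAt_iff_tendsto_slope.mp (Complex.hasDerivAt_sinh 0)
  rw [Complex.cosh_zero] at h
  refine h.congr ?_
  intro v
  simp [slope_def_field, Complex.sinh_zero]

theorem tendsto_div_sinh :
    Tendsto (fun v : ℂ => v / Complex.sinh v) (nhdsWithin 0 {(0:ℂ)}ᶜ) (nhds 1) := by
  have h := tendsto_sinh_div.inv₀ one_ne_zero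
  rw [inv_one] at h
  refine h.congr' ?_
  have hev : ∀ᶠ v in nhdsWithin (0:ℂ) {(0:ℂ)}ᶜ, v ≠ 0 ∧ ‖v‖ < Real.pi := by
    apply Filter.eventually_inf_principal.2
    have : ∀ᶠ v : ℂ in nhds 0, ‖v‖ < Real.pi := by
      have := Metric.ball_mem_nhds (0:ℂ) Real.pi_pos
      filter_upwards [this] with v hv
      simpa [Complex.dist_eq] using hv
    filter_upwards [this] with v hv hvne
    exact ⟨hvne, hv⟩
  filter_upwards [hev] with v hv
  rw [inv_div]

theorem tendsto_mul_cCoth : Tendsto (fun w : ℂ => w * cCoth ((Real.pi:ℂ)/2 * w))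
    (nhdsWithin 0 {(0:ℂ)}ᶜ) (nhds (2/Real.pi)) := by
  have hπ : (Real.pi:ℂ) ≠ 0 := by exact_mod_cast Real.pi_ne_zero
  have hmap : Tendsto (fun w : ℂ => (Real.pi:ℂ)/2 * w) (nhdsWithin 0 {(0:ℂ)}ᶜ)
      (nhdsWithin 0 {(0:ℂ)}ᶜ) := by
    apply Filter.Tendsto.inf
    · simpa using (continuous_mul_left ((Real.pi:ℂ)/2)).tendsto (0:ℂ)
    · refine Filter.tendsto_principal_principal.2 ?_
      intro w hw h0
      apply hw
      have : (Real.pi:ℂ)/2 * w = 0 := h0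
      have h4 : w = 0 := by
        rcases mul_eq_zero.mp this with h5 | h5
        · exact absurd h5 (div_ne_zero hπ two_ne_zero)
        · exact h5
      exact h4
  have h1 : Tendsto (fun w : ℂ => ((Real.pi:ℂ)/2 * w) / Complex.sinh ((Real.pi:ℂ)/2 * w))
      (nhdsWithin 0 {(0:ℂ)}ᶜ) (nhds 1) := tendsto_div_sinh.comp hmap
  have h2 : Tendsto (fun w : ℂ => Complex.cosh ((Real.pi:ℂ)/2 * w))
      (nhdsWithin 0 {(0:ℂ)}ᶜ) (nhds 1) := by
    have : Continuous (fun w : ℂ => Complex.cosh ((Real.pi:ℂ)/2 * w)) :=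
      Complex.continuous_cosh.comp (continuous_const.mul continuous_id)
    have h5 : Tendsto (fun w : ℂ => Complex.cosh ((Real.pi:ℂ)/2 * w)) (nhdsWithin (0:ℂ) {(0:ℂ)}ᶜ)
        (nhds (Complex.cosh ((Real.pi:ℂ)/2 * 0))) := (this.tendsto 0).mono_left nhdsWithin_le_nhds
    simpa using h5
  have h3 := (h1.mul h2).const_mul ((2:ℂ)/Real.pi)
  rw [mul_one, mul_one] at h3
  refine Tendsto.congr' ?_ (by simpa using h3 : Tendsto _ _ (nhds ((2:ℂ)/Real.pi)))
  filter_upwards [self_mem_nhdsWithin] with w hw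
  simp only [mem_compl_iff, mem_singleton_iff] at hw
  simp only [cCoth]
  have hwa : (2:ℂ)/Real.pi * ((Real.pi:ℂ)/2*w) = w := by field_simp
  have key : (2:ℂ)/Real.pi *
      (((Real.pi:ℂ)/2*w)/Complex.sinh ((Real.pi:ℂ)/2*w) * Complex.cosh ((Real.pi:ℂ)/2*w))
      = ((2:ℂ)/Real.pi * ((Real.pi:ℂ)/2*w)) *
        (Complex.cosh ((Real.pi:ℂ)/2*w)/Complex.sinh ((Real.pi:ℂ)/2*w)) := by
    ring
  rw [key, hwa]

theorem cCoth_re_zero {z : ℂ} (h : z.re = 0) : (cCoth z).re = 0 := by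
  have : z = (z.im:ℂ) * I := by apply Complex.ext <;> simp [h]
  rw [this]
  simp [cCoth, Complex.cosh_mul_I, Complex.sinh_mul_I, Complex.div_re]

theorem Wzeta_im_axis (γ β y : ℝ) : (Wzeta γ β (I * y)).im = 0 := by
  have h1 : ((Real.pi : ℂ) / 2 * (I * y - I * β)).re = 0 := by simp
  have h2 : ((Real.pi : ℂ) / 2 * (I * y + I * β)).re = 0 := by simp
  have c1 := cCoth_re_zero h1
  have c2 := cCoth_re_zero h2
  simp only [Wzeta, Complex.add_im, Complex.one_im, zero_add]
  rw [Complex.mul_im]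
  have hre : ((γ:ℂ) / (4 * I)).re = 0 := by
    simp [Complex.div_re]
  have him : ((γ:ℂ) / (4 * I)).im = -γ/4 := by
    simp [Complex.div_im]
    ring
  rw [hre, him]
  simp [Complex.sub_re, c1, c2]

theorem tendsto_sub_punctured (c : ℂ) :
    Filter.Tendsto (fun z : ℂ => z - c) (nhdsWithin c {c}ᶜ) (nhdsWithin 0 {(0:ℂ)}ᶜ) := by
  apply Filter.Tendsto.inf
  · have : Filter.Tendsto (fun z : ℂ => z - c) (nhds c) (nhds (c - c)) :=
      (continuous_id.sub continuous_const).tendsto c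
    simpa using this
  · refine Filter.tendsto_principal_principal.2 ?_
    intro z hz h0
    exact hz (by simpa [sub_eq_zero] using h0)

end Aux

set_option maxHeartbeats 1000000 in
theorem statement10 (β κ : ℝ) (hβ : β ∈ Ioo (0 : ℝ) 1)
    (hκ : κ * Real.sin (Real.pi * β) < Real.cos (Real.pi * β))
    (f g : ℂ → ℂ)
    (hf : DifferentiableOn ℂ f Dstrip)
    (hodd : ∀ z ∈ Dstrip, f (-z) = -f z)
    (hconj : ∀ z ∈ Dstrip, f ((starRingEnd ℂ) z) = (starRingEnd ℂ) (f z))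
    -- `g` is the continuous extension of `f'` to the closed strip
    (hgc : ContinuousOn g clDstrip)
    (hge : ∀ z ∈ Dstrip, g z = deriv f z)
    (hgne : ∀ z ∈ clDstrip, g z ≠ 0)
    (hglim : ∀ ε > 0, ∃ R : ℝ, ∀ z ∈ clDstrip, R ≤ |z.re| → ‖g z - 1‖ < ε)
    -- the Helmholtz–Kirchhoff condition
    (hHK : deriv (deriv f) (Complex.I * β) / deriv f (Complex.I * β) =
      (Real.pi : ℂ) * Complex.I * κ) :
    ∃ r₀ > 0, ∀ r ∈ Ioc (0 : ℝ) r₀, ∀ z : ℂ, ‖z - Complex.I * β‖ = r →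
      0 < z.re → z.im ∈ Ioo (0 : ℝ) 1 →
      -(Wzeta (gammaPV κ β) β z / deriv f z).im < 0 := by
  obtain ⟨hβ0, hβ1⟩ := hβ
  set γ : ℝ := gammaPV κ β with hγdef
  clear_value γ
  have hπ : (0:ℝ) < Real.pi := Real.pi_pos
  have hsin : 0 < Real.sin (Real.pi * β) :=
    Real.sin_pos_of_pos_of_lt_pi (by positivity) (by nlinarith)
  have hden : 0 < Real.cos (Real.pi * β) - κ * Real.sin (Real.pi * β) := by linarith
  have hγ : γ < 0 := by
    rw [hγdef, gammaPV]
    apply div_neg_of_neg_of_pos _ hden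
    nlinarith
  set c₀ : ℂ := Complex.I * β with hc₀def
  clear_value c₀
  have hc₀im : c₀.im = β := by simp [hc₀def]
  have hc₀re : c₀.re = 0 := by simp [hc₀def]
  have hc₀D : c₀ ∈ Dstrip := by
    simp only [Dstrip, mem_setOf_eq, mem_Ioo, hc₀im]
    constructor <;> linarith
  have hrealIm : ∀ t : ℝ, Complex.I * t ∈ Dstrip → (deriv f (Complex.I * t)).im = 0 := by
    intro t ht
    have h1 : (starRingEnd ℂ) (Complex.I * t) = -(Complex.I * t) := by
      apply Complex.ext <;> simp
    have h2 := deriv_conj_symm f hf hconj ht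
    rw [h1, deriv_neg_symm f hf hodd ht] at h2
    have := congrArg Complex.im h2
    simp only [Complex.conj_im] at this
    linarith
  have hrealRe : ∀ t : ℝ, (deriv f (t:ℂ)).im = 0 := by
    intro t
    have htD : (t:ℂ) ∈ Dstrip := by
      simp [Dstrip, mem_setOf_eq, mem_Ioo]
    have h2 := deriv_conj_symm f hf hconj htD
    rw [Complex.conj_ofReal] at h2
    have := congrArg Complex.im h2
    simp only [Complex.conj_im] at this
    linarith
  set a : ℝ := (deriv f c₀).re with hadef
  clear_value a
  have hA : deriv f c₀ = (a:ℂ) := by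
    apply Complex.ext
    · simp [hadef]
    · simp only [Complex.ofReal_im]
      rw [hc₀def]
      exact hrealIm β (by rwa [← hc₀def])
  have hfa : AnalyticOnNhd ℂ f Dstrip := hf.analyticOnNhd isOpen_Dstrip
  have hfd : AnalyticOnNhd ℂ (deriv f) Dstrip := hfa.deriv
  have hfdc : ContinuousOn (deriv f) Dstrip := hfd.continuousOn
  have hDne : ∀ z ∈ Dstrip, deriv f z ≠ 0 := by
    intro z hz
    rw [← hge z hz]
    exact hgne z (D_sub_clD hz)
  -- positivity of a via connectedness
  have hapos : 0 < a := by
    obtain ⟨R, hR⟩ := hglim (1/2) (by norm_num)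
    set p : ℂ := ((max R 0 : ℝ) : ℂ) with hpdef
    have hpD : p ∈ Dstrip := by simp [Dstrip, hpdef, mem_Ioo]
    have hppos : 0 < (deriv f p).re := by
      have h1 := hR p (D_sub_clD hpD) (by simp [hpdef, abs_of_nonneg (le_max_right R 0)])
      rw [hge p hpD] at h1
      have h2 : |(deriv f p - 1).re| ≤ ‖deriv f p - 1‖ := Complex.abs_re_le_norm _
      have h3 : (deriv f p - 1).re = (deriv f p).re - 1 := by simp
      rw [h3] at h2
      have := abs_lt.mp (lt_of_le_of_lt h2 h1)
      linarith [this.1]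
    set S : Set ℂ := segment ℝ 0 c₀ ∪ segment ℝ 0 p with hSdef
    have hSD : S ⊆ Dstrip := by
      rintro z (hz | hz)
      · rw [segment_eq_image] at hz
        obtain ⟨t, ht, rfl⟩ := hz
        simp only [smul_zero, zero_add]
        simp only [Dstrip, mem_setOf_eq, mem_Ioo, Complex.smul_im, hc₀im, smul_eq_mul]
        simp only [mem_Icc] at ht
        constructor <;> nlinarith
      · rw [segment_eq_image] at hz
        obtain ⟨t, ht, rfl⟩ := hz
        simp [Dstrip, mem_setOf_eq, mem_Ioo, Complex.smul_im, hpdef]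
    have hSreal : ∀ z ∈ S, (deriv f z).im = 0 := by
      rintro z (hz | hz)
      · rw [segment_eq_image] at hz
        obtain ⟨t, ht, rfl⟩ := hz
        have : ((1 - t) • (0:ℂ) + t • c₀) = Complex.I * ((t * β : ℝ) : ℂ) := by
          simp only [smul_zero, zero_add, hc₀def]
          push_cast
          rw [Complex.real_smul]
          ring
        beta_reduce
        rw [this]
        apply hrealIm
        rw [← this]
        apply hSD
        left
        rw [segment_eq_image]
        exact ⟨t, ht, rfl⟩
      · rw [segment_eq_image] at hz
        obtain ⟨t, ht, rfl⟩ := hz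
        have : ((1 - t) • (0:ℂ) + t • p) = ((t * max R 0 : ℝ) : ℂ) := by
          simp only [smul_zero, zero_add, hpdef]
          push_cast
          rw [Complex.real_smul]
        beta_reduce
        rw [this]
        exact hrealRe _
    have hScon : IsPreconnected S := by
      apply IsPreconnected.union (0:ℂ)
      · exact left_mem_segment ℝ 0 c₀
      · exact left_mem_segment ℝ 0 p
      · exact (convex_segment 0 c₀).isPreconnected
      · exact (convex_segment 0 p).isPreconnected
    have hφc : ContinuousOn (fun z => (deriv f z).re) S :=
      (Complex.continuous_re.comp_continuousOn (hfdc.mono hSD))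
    have hc₀S : c₀ ∈ S := Or.inl (right_mem_segment ℝ 0 c₀)
    have hpS : p ∈ S := Or.inr (right_mem_segment ℝ 0 p)
    by_contra hle
    push_neg at hle
    have hane : a ≠ 0 := by
      intro h0
      apply hDne c₀ hc₀D
      rw [hA, h0]
      simp
    have haneg : a < 0 := lt_of_le_of_ne hle hane
    have := hScon.intermediate_value hc₀S hpS hφc
    have h0mem : (0:ℝ) ∈ Icc ((deriv f c₀).re) ((deriv f p).re) := by
      constructor
      · rw [← hadef]; linarith
      · linarith
    obtain ⟨z, hzS, hz0⟩ := this h0mem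
    apply hDne z (hSD hzS)
    apply Complex.ext
    · exact hz0
    · exact hSreal z hzS
  -- geometric radius
  set ρ : ℝ := min β (1 - β) / 2 with hρdef
  clear_value ρ
  have hmβ : min β (1-β) ≤ β := min_le_left _ _
  have hmβ' : min β (1-β) ≤ 1 - β := min_le_right _ _
  have hρpos : 0 < ρ := by
    rw [hρdef]
    apply div_pos _ two_pos
    exact lt_min hβ0 (by linarith)
  have hρ14 : ρ ≤ 1/4 := by
    rw [hρdef]
    rcases le_total β (1-β) with h | h
    · rw [min_eq_left h]; linarith
    · rw [min_eq_right h]; linarith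
  have hballD : Metric.ball c₀ ρ ⊆ Dstrip := by
    intro z hz
    rw [Metric.mem_ball, Complex.dist_eq] at hz
    have h1 : |(z - c₀).im| ≤ ‖z - c₀‖ := Complex.abs_im_le_norm _
    have h2 : (z - c₀).im = z.im - β := by simp [hc₀im]
    rw [h2] at h1
    have h3 := abs_lt.mp (lt_of_le_of_lt h1 hz)
    simp only [Dstrip, mem_setOf_eq, mem_Ioo]
    constructor
    · nlinarith [h3.1]
    · nlinarith [h3.2]
  have hπc : (Real.pi:ℂ) ≠ 0 := by exact_mod_cast Real.pi_ne_zero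
  set B : Set ℂ := Metric.ball c₀ ρ with hBdef
  have hBo : IsOpen B := Metric.isOpen_ball
  have hc₀B : c₀ ∈ B := Metric.mem_ball_self hρpos
  have hBn : ∀ x : ℂ, x ∈ B → B ∈ nhds x := fun x hx => hBo.mem_nhds hx
  have hnorm_ball : ∀ z ∈ B, ‖z - c₀‖ < ρ := by
    intro z hz
    rw [hBdef, Metric.mem_ball, Complex.dist_eq] at hz
    simpa using hz
  have hsinh1 : ∀ z : ℂ, z ∈ B → z ≠ c₀ →
      Complex.sinh ((Real.pi:ℂ)/2 * (z - Complex.I*β)) ≠ 0 := by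
    intro z hz hne
    apply sinh_ne_zero_small
    · intro h0
      rcases mul_eq_zero.mp h0 with h5 | h5
      · exact (div_ne_zero hπc two_ne_zero) h5
      · exact hne (by rw [← hc₀def] at h5; exact sub_eq_zero.mp h5)
    · rw [norm_mul, ← hc₀def]
      have hn : ‖(Real.pi:ℂ)/2‖ = Real.pi/2 := by
        rw [norm_div]
        simp [Complex.norm_real, abs_of_nonneg hπ.le]
      rw [hn]
      have := hnorm_ball z hz
      nlinarith [norm_nonneg (z - c₀), hπ]
  have hsinh2 : ∀ z ∈ B, Complex.sinh ((Real.pi:ℂ)/2*(z + Complex.I*β)) ≠ 0 := by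
    intro z hz hs
    obtain ⟨k, hk⟩ := sinh_zero_int hs
    have hz1 : z - c₀ = ((2*(k:ℝ) - 2*β : ℝ):ℂ) * Complex.I := by
      have h7 : (Real.pi:ℂ)*(z - c₀) = (Real.pi:ℂ)*(((2*(k:ℝ) - 2*β : ℝ):ℂ) * Complex.I) := by
        rw [hc₀def]
        push_cast
        linear_combination 2*hk
      exact mul_left_cancel₀ hπc h7
    have hz2 : ‖z - c₀‖ = |2*(k:ℝ) - 2*β| := by
      rw [hz1, norm_mul, Complex.norm_I, mul_one, Complex.norm_real, Real.norm_eq_abs]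
    have hlb : 2 * min β (1-β) ≤ |2*(k:ℝ) - 2*β| := by
      rcases le_or_gt k 0 with h | h
      · have hk0 : (k:ℝ) ≤ 0 := by exact_mod_cast h
        rw [abs_sub_comm, abs_of_nonneg (by nlinarith)]
        nlinarith
      · have hk1 : (1:ℝ) ≤ (k:ℝ) := by exact_mod_cast h
        rw [abs_of_nonneg (by nlinarith)]
        nlinarith
    have := hnorm_ball z hz
    rw [hz2] at this
    have : 2 * min β (1-β) < ρ := lt_of_le_of_lt hlb this
    rw [hρdef] at this
    have hm0 : 0 < min β (1-β) := lt_min hβ0 (by linarith)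
    linarith
  have hWd : ∀ z : ℂ, z ∈ B → z ≠ c₀ → DifferentiableAt ℂ (Wzeta γ β) z := by
    intro z hz hne
    have hinner1 : Differentiable ℂ (fun w : ℂ => (Real.pi:ℂ)/2*(w - Complex.I*β)) :=
      (differentiable_id.sub_const _).const_mul _
    have hinner2 : Differentiable ℂ (fun w : ℂ => (Real.pi:ℂ)/2*(w + Complex.I*β)) :=
      (differentiable_id.add_const _).const_mul _
    have d1 : DifferentiableAt ℂ (fun w => Complex.cosh ((Real.pi:ℂ)/2*(w - Complex.I*β))) z :=
      (Complex.differentiable_cosh.comp hinner1).differentiableAt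
    have d2 : DifferentiableAt ℂ (fun w => Complex.sinh ((Real.pi:ℂ)/2*(w - Complex.I*β))) z :=
      (Complex.differentiable_sinh.comp hinner1).differentiableAt
    have d3 : DifferentiableAt ℂ (fun w => Complex.cosh ((Real.pi:ℂ)/2*(w + Complex.I*β))) z :=
      (Complex.differentiable_cosh.comp hinner2).differentiableAt
    have d4 : DifferentiableAt ℂ (fun w => Complex.sinh ((Real.pi:ℂ)/2*(w + Complex.I*β))) z :=
      (Complex.differentiable_sinh.comp hinner2).differentiableAt
    have : Wzeta γ β = fun w => 1 + (γ:ℂ)/(4*Complex.I) *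
        (Complex.cosh ((Real.pi:ℂ)/2*(w - Complex.I*β)) / Complex.sinh ((Real.pi:ℂ)/2*(w - Complex.I*β)) -
         Complex.cosh ((Real.pi:ℂ)/2*(w + Complex.I*β)) / Complex.sinh ((Real.pi:ℂ)/2*(w + Complex.I*β))) := by
      funext w; simp [Wzeta, cCoth]
    rw [this]
    exact (differentiableAt_const _).add ((differentiableAt_const _).mul
      (((d1.div d2 (hsinh1 z hz hne))).sub (d3.div d4 (hsinh2 z hz))))
  set u : ℂ → ℂ := fun z => Wzeta γ β z / deriv f z with hudef
  set P : ℂ → ℂ := fun z => ((-γ/(2*Real.pi):ℝ):ℂ) * Complex.I / ((a:ℂ) * (z - c₀)) with hPdef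
  set F : ℂ → ℂ := fun z => u z - P z with hFdef
  have haC : (a:ℂ) ≠ 0 := by exact_mod_cast hapos.ne'
  have hFd : DifferentiableOn ℂ F (B \ {c₀}) := by
    intro z hz
    apply DifferentiableAt.differentiableWithinAt
    obtain ⟨hzB, hzne'⟩ := hz
    have hzne : z ≠ c₀ := hzne'
    have hzD : z ∈ Dstrip := hballD hzB
    have hdf : DifferentiableAt ℂ (deriv f) z :=
      (hfd z hzD).differentiableAt
    refine DifferentiableAt.sub ?_ ?_
    · exact (hWd z hzB hzne).div hdf (hDne z hzD)
    · exact (differentiableAt_const _).div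
        ((differentiableAt_const _).mul (differentiableAt_id.sub_const _))
        (mul_ne_zero haC (sub_ne_zero.mpr hzne))
  -- the limit of (z - c₀) * F z at c₀ is 0
  have hIne : (Complex.I : ℂ) ≠ 0 := Complex.I_ne_zero
  have hWlim : Filter.Tendsto (fun z => (z - c₀) * Wzeta γ β z) (nhdsWithin c₀ {c₀}ᶜ)
      (nhds ((γ:ℂ)/(4*Complex.I) * (2/Real.pi))) := by
    have hp1 : Filter.Tendsto (fun z : ℂ => z - c₀) (nhdsWithin c₀ {c₀}ᶜ) (nhds 0) :=
      (tendsto_sub_punctured c₀).mono_right nhdsWithin_le_nhds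
    have hp2 : Filter.Tendsto (fun z : ℂ => (z - c₀) * cCoth ((Real.pi:ℂ)/2 * (z - Complex.I*β)))
        (nhdsWithin c₀ {c₀}ᶜ) (nhds (2/Real.pi)) := by
      have := tendsto_mul_cCoth.comp (tendsto_sub_punctured c₀)
      refine this.congr ?_
      intro z
      simp only [Function.comp_apply, hc₀def]
    have hp3 : Filter.Tendsto (fun z : ℂ => (z - c₀) * cCoth ((Real.pi:ℂ)/2 * (z + Complex.I*β)))
        (nhdsWithin c₀ {c₀}ᶜ) (nhds 0) := by
      have hcont : ContinuousAt (fun z : ℂ => cCoth ((Real.pi:ℂ)/2 * (z + Complex.I*β))) c₀ := by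
        have hs : Complex.sinh ((Real.pi:ℂ)/2 * (c₀ + Complex.I*β)) ≠ 0 :=
          hsinh2 c₀ hc₀B
        have hc1 : ContinuousAt (fun z : ℂ => Complex.cosh ((Real.pi:ℂ)/2 * (z + Complex.I*β))) c₀ :=
          (Complex.continuous_cosh.comp (continuous_const.mul (continuous_id.add continuous_const))).continuousAt
        have hc2 : ContinuousAt (fun z : ℂ => Complex.sinh ((Real.pi:ℂ)/2 * (z + Complex.I*β))) c₀ :=
          (Complex.continuous_sinh.comp (continuous_const.mul (continuous_id.add continuous_const))).continuousAt
        exact hc1.div hc2 hs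
      have := hp1.mul (hcont.tendsto.mono_left nhdsWithin_le_nhds)
      simpa using this
    have hsum := (hp2.sub hp3).const_mul ((γ:ℂ)/(4*Complex.I))
    have htot := hp1.add hsum
    rw [sub_zero] at hsum
    have h0 : (0:ℂ) + (γ:ℂ)/(4*Complex.I) * (2/Real.pi - 0) = (γ:ℂ)/(4*Complex.I) * (2/Real.pi) := by
      ring
    rw [h0] at htot
    refine htot.congr ?_
    intro z
    simp only [Wzeta]
    ring
  have hdfinv : Filter.Tendsto (fun z => (deriv f z)⁻¹) (nhdsWithin c₀ {c₀}ᶜ) (nhds ((a:ℂ)⁻¹)) := by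
    have hct : ContinuousAt (deriv f) c₀ :=
      (hfd c₀ hc₀D).continuousAt
    have h1 : Filter.Tendsto (deriv f) (nhdsWithin c₀ {c₀}ᶜ) (nhds ((a:ℂ))) := by
      rw [← hA]
      exact hct.tendsto.mono_left nhdsWithin_le_nhds
    exact h1.inv₀ haC
  have hulim : Filter.Tendsto (fun z => (z - c₀) * u z) (nhdsWithin c₀ {c₀}ᶜ)
      (nhds ((γ:ℂ)/(4*Complex.I) * (2/Real.pi) * (a:ℂ)⁻¹)) := by
    refine (hWlim.mul hdfinv).congr ?_
    intro z
    simp only [hudef]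
    rw [div_eq_mul_inv]
    ring
  have hPval : ∀ z : ℂ, z ≠ c₀ → (z - c₀) * P z = ((-γ/(2*Real.pi):ℝ):ℂ) * Complex.I / (a:ℂ) := by
    intro z hz
    simp only [hPdef]
    have h1 : z - c₀ ≠ 0 := sub_ne_zero.mpr hz
    field_simp
  have hconstEq : (γ:ℂ)/(4*Complex.I) * (2/Real.pi) * (a:ℂ)⁻¹
      = ((-γ/(2*Real.pi):ℝ):ℂ) * Complex.I / (a:ℂ) := by
    have hI := Complex.I_sq
    push_cast
    field_simp
    linear_combination (4*(γ:ℂ)) * hI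
  have hFlim0 : Filter.Tendsto (fun z => (z - c₀) * F z) (nhdsWithin c₀ {c₀}ᶜ) (nhds 0) := by
    have h1 : Filter.Tendsto (fun z => (z - c₀) * u z - (z - c₀) * P z) (nhdsWithin c₀ {c₀}ᶜ)
        (nhds ((γ:ℂ)/(4*Complex.I) * (2/Real.pi) * (a:ℂ)⁻¹ - ((-γ/(2*Real.pi):ℝ):ℂ) * Complex.I / (a:ℂ))) := by
      apply hulim.sub
      apply Filter.Tendsto.congr' _ (tendsto_const_nhds)
      filter_upwards [self_mem_nhdsWithin] with z hz
      exact (hPval z hz).symm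
    rw [hconstEq, sub_self] at h1
    refine h1.congr ?_
    intro z
    simp only [hFdef]
    ring
  have ho : (fun z => F z - F c₀) =o[nhdsWithin c₀ {c₀}ᶜ] fun z => (z - c₀)⁻¹ := by
    rw [Asymptotics.isLittleO_iff_tendsto']
    · have h2 : Filter.Tendsto (fun z : ℂ => (z - c₀) * F c₀) (nhdsWithin c₀ {c₀}ᶜ) (nhds 0) := by
        have hp1 : Filter.Tendsto (fun z : ℂ => z - c₀) (nhdsWithin c₀ {c₀}ᶜ) (nhds 0) :=
          (tendsto_sub_punctured c₀).mono_right nhdsWithin_le_nhds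
        simpa using hp1.mul_const (F c₀)
      have := hFlim0.sub h2
      rw [sub_zero] at this
      refine this.congr' ?_
      filter_upwards [self_mem_nhdsWithin] with z hz
      simp only [mem_compl_iff, mem_singleton_iff] at hz
      rw [div_eq_mul_inv, inv_inv]
      ring
    · filter_upwards [self_mem_nhdsWithin] with z hz h0
      exfalso
      simp only [mem_compl_iff, mem_singleton_iff] at hz
      exact (inv_ne_zero (sub_ne_zero.mpr hz)) h0
  set G : ℂ → ℂ := Function.update F c₀ (Filter.limUnder (nhdsWithin c₀ {c₀}ᶜ) F) with hGdef
  have hGd : DifferentiableOn ℂ G B := by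
    rw [hGdef]
    exact Complex.differentiableOn_update_limUnder_of_isLittleO (hBn c₀ hc₀B) hFd ho
  have hGF : ∀ z : ℂ, z ≠ c₀ → G z = F z := by
    intro z hz
    rw [hGdef]
    exact Function.update_of_ne hz _ _
  -- G is real on the imaginary axis
  have hFax : ∀ y : ℝ, Complex.I * (y:ℂ) ∈ B → Complex.I * (y:ℂ) ≠ c₀ →
      (F (Complex.I * (y:ℂ))).im = 0 := by
    intro y hyB hyne
    have hyD : Complex.I * (y:ℂ) ∈ Dstrip := hballD hyB
    have hWim : (Wzeta γ β (Complex.I * (y:ℂ))).im = 0 := Wzeta_im_axis γ β y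
    have hdim : (deriv f (Complex.I * (y:ℂ))).im = 0 := hrealIm y hyD
    have h1 : (u (Complex.I * (y:ℂ))).im = 0 := by
      rw [hudef]
      beta_reduce
      rw [Complex.div_im, hWim, hdim]
      simp
    have h2 : (P (Complex.I * (y:ℂ))).im = 0 := by
      rw [hPdef]
      beta_reduce
      have hden2 : (a:ℂ) * (Complex.I * (y:ℂ) - c₀) = ((a*(y-β):ℝ):ℂ) * Complex.I := by
        rw [hc₀def]; push_cast; ring
      have e1 : ((((a*(y-β)):ℝ):ℂ) * Complex.I).re = 0 := by
        rw [Complex.mul_I_re, Complex.ofReal_im, neg_zero]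
      have e2 : ((((-γ/(2*Real.pi)):ℝ):ℂ) * Complex.I).re = 0 := by
        rw [Complex.mul_I_re, Complex.ofReal_im, neg_zero]
      rw [hden2, Complex.div_im, e1, e2]
      simp
    rw [hFdef]
    beta_reduce
    rw [Complex.sub_im, h1, h2, sub_zero]
  have hρ2pos : 0 < ρ/2 := by linarith
  have hsubB : Metric.closedBall c₀ (ρ/2) ⊆ B := by
    rw [hBdef]
    exact Metric.closedBall_subset_ball (by linarith)

  have hGax : ∀ y : ℝ, Complex.I * (y:ℂ) ∈ Metric.closedBall c₀ (ρ/2) →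
      (G (Complex.I * (y:ℂ))).im = 0 := by
    intro y hy
    rcases eq_or_ne (Complex.I * (y:ℂ)) c₀ with h | h
    · rw [h]
      have hGc : ContinuousAt G c₀ := (hGd.differentiableAt (hBn c₀ hc₀B)).continuousAt
      have hmap : Filter.Tendsto (fun t : ℝ => Complex.I * ((β + t : ℝ):ℂ))
          (nhdsWithin 0 (Ioi 0)) (nhds c₀) := by
        have hcont2 : Continuous fun t : ℝ => Complex.I * ((β + t:ℝ):ℂ) :=
          continuous_const.mul (Complex.continuous_ofReal.comp (continuous_const.add continuous_id))
        have h5 : Filter.Tendsto (fun t : ℝ => Complex.I * ((β + t:ℝ):ℂ))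
            (nhdsWithin (0:ℝ) (Ioi 0)) (nhds (Complex.I * ((β + (0:ℝ):ℝ):ℂ))) :=
          (hcont2.tendsto 0).mono_left nhdsWithin_le_nhds
        simpa [hc₀def] using h5
      have hev : ∀ᶠ t : ℝ in nhdsWithin 0 (Ioi 0),
          (G (Complex.I * ((β + t:ℝ):ℂ))).im = 0 := by
        filter_upwards [Ioo_mem_nhdsGT_of_mem (Set.left_mem_Ico.mpr hρ2pos)] with t ht
        obtain ⟨ht0, htρ⟩ := ht
        have hne : Complex.I * ((β+t:ℝ):ℂ) ≠ c₀ := by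
          rw [hc₀def]
          intro hcon
          have := mul_left_cancel₀ Complex.I_ne_zero hcon
          have : (β + t : ℝ) = β := by exact_mod_cast this
          linarith
        have hBmem : Complex.I * ((β+t:ℝ):ℂ) ∈ B := by
          rw [hBdef] at *
          rw [Metric.mem_ball, Complex.dist_eq, hc₀def]
          have heq9 : Complex.I * ((β+t:ℝ):ℂ) - Complex.I * (β:ℂ) = ((t:ℝ):ℂ) * Complex.I := by
            push_cast; ring
          rw [heq9]
          rw [norm_mul, Complex.norm_I, mul_one, Complex.norm_real, Real.norm_eq_abs]
          rw [abs_of_pos ht0]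
          linarith
        rw [hGF _ hne]
        exact hFax (β+t) hBmem hne
      have h6 : Filter.Tendsto (fun t : ℝ => (G (Complex.I * ((β+t:ℝ):ℂ))).im)
          (nhdsWithin 0 (Ioi 0)) (nhds ((G c₀).im)) :=
        (Complex.continuous_im.tendsto _).comp (hGc.tendsto.comp hmap)
      have h7 : Filter.Tendsto (fun t : ℝ => (G (Complex.I * ((β+t:ℝ):ℂ))).im)
          (nhdsWithin 0 (Ioi 0)) (nhds 0) := by
        refine Filter.Tendsto.congr' ?_ tendsto_const_nhds
        filter_upwards [hev] with t ht
        exact ht.symm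
      exact tendsto_nhds_unique h6 h7
    · rw [hGF _ h]
      exact hFax y (hsubB hy) h
  -- Lipschitz bound for G on the closed half-ball
  have hGa : AnalyticOnNhd ℂ G B := hGd.analyticOnNhd hBo
  have hG'c : ContinuousOn (deriv G) (Metric.closedBall c₀ (ρ/2)) :=
    (hGa.deriv.continuousOn).mono hsubB
  obtain ⟨C, hC⟩ := (isCompact_closedBall c₀ (ρ/2)).exists_bound_of_continuousOn hG'c
  set L : ℝ := max C 0 with hLdef
  have hL0 : 0 ≤ L := le_max_right _ _
  have hGdiff : ∀ x ∈ Metric.closedBall c₀ (ρ/2), DifferentiableAt ℂ G x := by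
    intro x hx
    exact hGd.differentiableAt (hBn x (hsubB hx))
  have hLip : ∀ z₁ ∈ Metric.closedBall c₀ (ρ/2), ∀ z₂ ∈ Metric.closedBall c₀ (ρ/2),
      ‖G z₁ - G z₂‖ ≤ L * ‖z₁ - z₂‖ := by
    intro z₁ h₁ z₂ h₂
    refine Convex.norm_image_sub_le_of_norm_fderiv_le hGdiff ?_
      (convex_closedBall _ _) h₂ h₁
    intro x hx
    have heqf : fderiv ℂ G x = ContinuousLinearMap.smulRight (1 : ℂ →L[ℂ] ℂ) (deriv G x) :=
      ((hGdiff x hx).hasDerivAt.hasFDerivAt).fderiv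
    rw [heqf]
    rw [ContinuousLinearMap.norm_smulRight_apply, norm_one, one_mul]
    exact le_trans (hC x hx) (le_max_left _ _)
  -- choice of r₀
  have h2πa : 0 < 2 * Real.pi * a * (L + 1) := by positivity
  set r₀ : ℝ := min (ρ/2) (Real.sqrt (-γ / (2 * Real.pi * a * (L + 1)))) with hr₀def
  have hargpos : 0 < -γ / (2 * Real.pi * a * (L + 1)) := by
    apply div_pos (by linarith) h2πa
  have hr₀pos : 0 < r₀ := by
    rw [hr₀def]
    exact lt_min hρ2pos (Real.sqrt_pos.mpr hargpos)
  refine ⟨r₀, hr₀pos, ?_⟩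
  rintro r ⟨hrpos, hrle⟩ z hzr hx ⟨hy0, hy1⟩
  have hrρ : r ≤ ρ/2 := le_trans hrle (by rw [hr₀def]; exact min_le_left _ _)
  have hrs : r ≤ Real.sqrt (-γ / (2 * Real.pi * a * (L + 1))) :=
    le_trans hrle (by rw [hr₀def]; exact min_le_right _ _)
  have hr2 : r^2 ≤ -γ / (2 * Real.pi * a * (L + 1)) := by
    have := Real.sq_sqrt hargpos.le
    nlinarith [Real.sqrt_nonneg (-γ / (2 * Real.pi * a * (L + 1)))]
  have hzcb : z ∈ Metric.closedBall c₀ (ρ/2) := by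
    rw [Metric.mem_closedBall, Complex.dist_eq, hzr]
    exact hrρ
  have hzne : z ≠ c₀ := by
    intro h
    rw [h, sub_self, norm_zero] at hzr
    linarith
  set x : ℝ := z.re with hxdef
  set y : ℝ := z.im with hydef
  have hiy : Complex.I * (y:ℂ) ∈ Metric.closedBall c₀ (ρ/2) := by
    rw [Metric.mem_closedBall, Complex.dist_eq, hc₀def]
    have heq9 : Complex.I * (y:ℂ) - Complex.I * (β:ℂ) = ((y - β:ℝ):ℂ) * Complex.I := by
      push_cast; ring
    rw [heq9, norm_mul, Complex.norm_I, mul_one, Complex.norm_real, Real.norm_eq_abs]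
    have him : |(z - c₀).im| ≤ ‖z - c₀‖ := Complex.abs_im_le_norm _
    have himeq : (z - c₀).im = y - β := by simp [hc₀im, hydef]
    rw [himeq] at him
    have : ‖z - c₀‖ = r := by rw [hzr]
    linarith [le_trans him (le_of_eq this)]
  have hGimy : (G (Complex.I * (y:ℂ))).im = 0 := hGax y hiy
  have hziy : z - Complex.I * (y:ℂ) = ((x:ℝ):ℂ) := by
    apply Complex.ext <;> simp [hxdef, hydef]
  have hnormx : ‖z - Complex.I * (y:ℂ)‖ = x := by
    rw [hziy, Complex.norm_real, Real.norm_eq_abs, abs_of_pos hx]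
  -- bound -(G z).im
  have hGbound : -(G z).im ≤ L * x := by
    have h1 : |(G z - G (Complex.I * (y:ℂ))).im| ≤ ‖G z - G (Complex.I * (y:ℂ))‖ := by
      exact Complex.abs_im_le_norm _
    have h2 : (G z - G (Complex.I * (y:ℂ))).im = (G z).im := by
      rw [Complex.sub_im, hGimy, sub_zero]
    rw [h2] at h1
    have h3 := hLip z hzcb (Complex.I * (y:ℂ)) hiy
    rw [hnormx] at h3
    have h4 : -(G z).im ≤ |(G z).im| := neg_le_abs _
    linarith
  -- compute (P z).im
  have hnormsq : Complex.normSq (z - c₀) = r^2 := by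
    rw [Complex.normSq_eq_norm_sq, hzr]
  have hPim : (P z).im = (-γ/(2*Real.pi)) * (a * x) / (a^2 * r^2) := by
    rw [hPdef]
    beta_reduce
    rw [Complex.div_im]
    have hDre : ((a:ℂ) * (z - c₀)).re = a * x := by
      simp [Complex.mul_re, hc₀re, hxdef, Complex.sub_re]
    have hDim : ((a:ℂ) * (z - c₀)).im = a * (y - β) := by
      simp [Complex.mul_im, hc₀im, hydef, Complex.sub_im]
    have hNre : (((-γ/(2*Real.pi):ℝ):ℂ) * Complex.I).re = 0 := by
      rw [Complex.mul_I_re, Complex.ofReal_im, neg_zero]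
    have hNim : (((-γ/(2*Real.pi):ℝ):ℂ) * Complex.I).im = -γ/(2*Real.pi) := by
      rw [Complex.mul_I_im, Complex.ofReal_re]
    have hNsq : Complex.normSq ((a:ℂ) * (z - c₀)) = a^2 * r^2 := by
      rw [Complex.normSq_mul, hnormsq, Complex.normSq_ofReal]
      ring
    rw [hDre, hDim, hNre, hNim, hNsq]
    ring
  -- decomposition
  have hdecomp : Wzeta γ β z / deriv f z = G z + P z := by
    rw [hGF z hzne, hFdef]
    beta_reduce
    rw [hudef]
    beta_reduce
    ring
  rw [hdecomp, Complex.add_im]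
  -- final numeric estimate
  have hPpos : (P z).im = -γ * x / (2 * Real.pi * a * r^2) := by
    rw [hPim]
    field_simp
  have hr2pos : 0 < r^2 := by positivity
  have hdenpos : (0:ℝ) < 2 * Real.pi * a * r^2 := by positivity
  have h8 : r^2 * (2 * Real.pi * a * (L + 1)) ≤ -γ := (le_div_iff₀ h2πa).mp hr2
  have hPlb : (L + 1) * x ≤ (P z).im := by
    rw [hPpos, le_div_iff₀ hdenpos]
    nlinarith [hx.le]
  linarith [hGbound, hPlb, hx]
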